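/- arXiv:1704.05722 — 3 statements merged into one kernel-verified Lean document; each statement's English description precedes it below -/
import Mathlib

section
/- For the function M(s) = ∫₀^s t·μ(t) dt with μ the Langevin law, it holds that (1/2)s² ≤ M(s) ≤ (1/2)(1 + γ M_s/3) s² for all s ≥ 0, with equality (on either side) if and only if s = 0. -/
open Real in
lemma aux1 {x : ℝ} (hx : 0 < x) : Real.sinh x < x * Real.cosh x := by
  have key : StrictMonoOn (fun x : ℝ => x * Real.cosh x - Real.sinh x) (Set.Ici 0) := by
    apply strictMonoOn_of_deriv_pos (convex_Ici 0)
    · fun_prop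
    · intro y hy
      rw [interior_Ici] at hy
      have h1 : HasDerivAt (fun x : ℝ => x * Real.cosh x - Real.sinh x)
          (1 * Real.cosh y + y * Real.sinh y - Real.cosh y) y :=
        ((hasDerivAt_id y).mul (Real.hasDerivAt_cosh y)).sub (Real.hasDerivAt_sinh y)
      rw [h1.deriv]
      have hp := Real.sinh_pos_iff.mpr hy
      have := mul_pos (Set.mem_Ioi.mp hy) hp
      linarith
  have := key (Set.self_mem_Ici) (Set.mem_Ici.mpr hx.le) hx
  simpa using this

lemma aux2 {x : ℝ} (hx : 0 < x) :
    3 * (x * Real.cosh x - Real.sinh x) < x ^ 2 * Real.sinh x := by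
  have key : StrictMonoOn
      (fun x : ℝ => x ^ 2 * Real.sinh x - 3 * (x * Real.cosh x - Real.sinh x)) (Set.Ici 0) := by
    apply strictMonoOn_of_deriv_pos (convex_Ici 0)
    · fun_prop
    · intro y hy
      rw [interior_Ici] at hy
      have h1 : HasDerivAt (fun x : ℝ => x ^ 2 * Real.sinh x - 3 * (x * Real.cosh x - Real.sinh x))
          ((2 * y ^ 1 * Real.sinh y + y ^ 2 * Real.cosh y) -
            3 * ((1 * Real.cosh y + y * Real.sinh y) - Real.cosh y)) y := by
        exact (((hasDerivAt_pow 2 y).mul (Real.hasDerivAt_sinh y)).sub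
          ((((hasDerivAt_id y).mul (Real.hasDerivAt_cosh y)).sub (Real.hasDerivAt_sinh y)).const_mul 3))
      rw [h1.deriv]
      have h2 := aux1 hy
      have hy' : (0:ℝ) < y := hy
      nlinarith [mul_pos hy' (sub_pos.mpr h2)]
  have := key (Set.self_mem_Ici) (Set.mem_Ici.mpr hx.le) hx
  simp only [ne_eq, OfNat.ofNat_ne_zero, not_false_eq_true, zero_pow, Real.sinh_zero,
    mul_zero, Real.cosh_zero, zero_mul, sub_zero, zero_sub, mul_zero] at this
  linarith [this]

lemma langevin_pos {x : ℝ} (hx : 0 < x) : 0 < Real.cosh x / Real.sinh x - 1 / x := by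
  have hs := Real.sinh_pos_iff.mpr hx
  have h := aux1 hx
  rw [sub_pos, div_lt_div_iff₀ hx hs]
  linarith

lemma langevin_lt {x : ℝ} (hx : 0 < x) : Real.cosh x / Real.sinh x - 1 / x < x / 3 := by
  have hs := Real.sinh_pos_iff.mpr hx
  have h := aux2 hx
  rw [div_sub_div _ _ hs.ne' hx.ne', div_lt_div_iff₀ (by positivity) (by norm_num)]
  nlinarith

open intervalIntegral in
lemma integral_id' (a b : ℝ) : ∫ x in a..b, x = (b ^ 2 - a ^ 2) / 2 := integral_id

/-- For `M(s) = ∫₀ˢ t·μ(t) dt` with `μ` the Langevin law, one has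
`s²/2 ≤ M(s) ≤ (1/2)(1 + γ·Ms/3)s²` for `s ≥ 0`, with equality on either side iff `s = 0`. -/
theorem langevin_M_bounds (Ms γ : ℝ) (hMs : 0 < Ms) (hγ : 0 < γ)
    (μ : ℝ → ℝ)
    (hμ : ∀ s : ℝ, s ≠ 0 →
      μ s = 1 + (Ms / s) * (Real.cosh (γ * s) / Real.sinh (γ * s) - 1 / (γ * s)))
    (hμ0 : μ 0 = 1 + Ms * γ / 3)
    (M : ℝ → ℝ) (hM : ∀ s : ℝ, M s = ∫ t in (0:ℝ)..s, t * μ t) :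
    ∀ s : ℝ, 0 ≤ s →
      (1 / 2 * s ^ 2 ≤ M s ∧ M s ≤ 1 / 2 * (1 + γ * Ms / 3) * s ^ 2) ∧
      (M s = 1 / 2 * s ^ 2 ↔ s = 0) ∧
      (M s = 1 / 2 * (1 + γ * Ms / 3) * s ^ 2 ↔ s = 0) := by
  intro s hs
  set c : ℝ := 1 + γ * Ms / 3 with hc
  have hcpos : 0 < c := by positivity
  rcases eq_or_lt_of_le hs with h0 | hpos
  · rw [← h0]
    have : M 0 = 0 := by rw [hM 0, intervalIntegral.integral_same]
    simp [this]
  · -- pointwise bounds on (0, s]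
    have hbound : ∀ t ∈ Set.Ioc 0 s, t < t * μ t ∧ t * μ t < c * t := by
      intro t ht
      have ht0 : 0 < t := ht.1
      have hx : 0 < γ * t := mul_pos hγ ht0
      have hfeq : t * μ t = t + Ms * (Real.cosh (γ*t)/Real.sinh (γ*t) - 1/(γ*t)) := by
        rw [hμ t ht0.ne']
        field_simp
      have h1 := langevin_pos hx
      have h2 := langevin_lt hx
      constructor
      · nlinarith
      · rw [hfeq, hc]; nlinarith
    -- integrability
    have hmeas : Measurable
        (fun t : ℝ => t + Ms * (Real.cosh (γ*t)/Real.sinh (γ*t) - 1/(γ*t))) := by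
      have hm : Measurable fun t : ℝ => γ * t := measurable_const.mul measurable_id
      exact measurable_id.add (measurable_const.mul
        (((Real.continuous_cosh.measurable.comp hm).div
          (Real.continuous_sinh.measurable.comp hm)).sub (measurable_const.div hm)))
    have hint : IntervalIntegrable (fun t => t * μ t) MeasureTheory.volume 0 s := by
      rw [intervalIntegrable_iff_integrableOn_Ioc_of_le hs]
      apply MeasureTheory.Integrable.mono' (g := fun _ => c * s)
      · exact MeasureTheory.integrableOn_const measure_Ioc_lt_top.ne
      · apply hmeas.aestronglyMeasurable.congr
        filter_upwards [MeasureTheory.ae_restrict_mem measurableSet_Ioc] with t ht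
        have ht0 : (0:ℝ) < t := ht.1
        rw [hμ t ht0.ne']
        field_simp
      · filter_upwards [MeasureTheory.ae_restrict_mem measurableSet_Ioc] with t ht
        have h := hbound t ht
        have hpos' : 0 < t * μ t := lt_trans ht.1 h.1
        rw [Real.norm_eq_abs, abs_of_pos hpos']
        calc t * μ t ≤ c * t := h.2.le
        _ ≤ c * s := by nlinarith [ht.2]
    have hid : IntervalIntegrable (fun t : ℝ => t) MeasureTheory.volume 0 s :=
      continuous_id.intervalIntegrable 0 s
    have hcid : IntervalIntegrable (fun t : ℝ => c * t) MeasureTheory.volume 0 s :=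
      (continuous_const.mul continuous_id).intervalIntegrable 0 s
    have hlow : 0 < ∫ t in (0:ℝ)..s, (t * μ t - t) := by
      apply intervalIntegral.intervalIntegral_pos_of_pos_on (hint.sub hid) _ hpos
      intro t ht
      have := (hbound t ⟨ht.1, ht.2.le⟩).1
      linarith
    have hupp : 0 < ∫ t in (0:ℝ)..s, (c * t - t * μ t) := by
      apply intervalIntegral.intervalIntegral_pos_of_pos_on (hcid.sub hint) _ hpos
      intro t ht
      have := (hbound t ⟨ht.1, ht.2.le⟩).2
      linarith
    rw [intervalIntegral.integral_sub hint hid, integral_id'] at hlow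
    rw [intervalIntegral.integral_sub hcid hint] at hupp
    rw [intervalIntegral.integral_const_mul, integral_id'] at hupp
    rw [← hM s] at hlow hupp
    have hl : 1 / 2 * s ^ 2 < M s := by linarith
    have hu : M s < 1 / 2 * c * s ^ 2 := by linarith
    refine ⟨⟨hl.le, by linarith⟩, ?_, ?_⟩
    · constructor <;> intro h <;> linarith
    · constructor <;> intro h <;> linarith
end

section
/- The function M(s) = s²/2 + (M_s/γ)(ln(sinh(γs)) - ln s - ln γ) (extended by M(0)=0) is a convex function on (0,∞), and it is a primitive of s·μ(s) where μ is the Langevin law. -/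
/-- The explicit primitive `M(s) = s²/2 + (Ms/γ)(ln sinh(γs) - ln s - ln γ)` is convex on
`(0,∞)` and is a primitive of `s·μ(s)`, where `μ` is the Langevin law. -/
theorem langevin_M_convex_primitive (Ms γ : ℝ) (hMs : 0 < Ms) (hγ : 0 < γ)
    (μ : ℝ → ℝ)
    (hμ : ∀ s : ℝ, 0 < s →
      μ s = 1 + (Ms / s) * (Real.cosh (γ * s) / Real.sinh (γ * s) - 1 / (γ * s)))
    (M : ℝ → ℝ)
    (hMdef : ∀ s : ℝ, 0 < s →
      M s = s ^ 2 / 2 + (Ms / γ) * (Real.log (Real.sinh (γ * s)) - Real.log s - Real.log γ))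
    (hM0 : M 0 = 0) :
    ConvexOn ℝ (Set.Ioi (0:ℝ)) M ∧ ∀ s : ℝ, 0 < s → HasDerivAt M (s * μ s) s := by
  -- auxiliary facts
  have hsinh_pos : ∀ s : ℝ, 0 < s → 0 < Real.sinh (γ * s) := fun s hs =>
    Real.sinh_pos_iff.mpr (mul_pos hγ hs)
  set F : ℝ → ℝ := fun s =>
    s ^ 2 / 2 + (Ms / γ) * (Real.log (Real.sinh (γ * s)) - Real.log s - Real.log γ) with hF
  set f : ℝ → ℝ := fun s =>
    s + Ms * (Real.cosh (γ * s) / Real.sinh (γ * s)) - Ms / (γ * s) with hf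
  -- F has derivative f on (0,∞)
  have hFderiv : ∀ s : ℝ, 0 < s → HasDerivAt F (f s) s := by
    intro s hs
    have hγs : γ * s ≠ 0 := (mul_pos hγ hs).ne'
    have hsh := (hsinh_pos s hs).ne'
    have hlin : HasDerivAt (fun x : ℝ => γ * x) γ s := by
      simpa using (hasDerivAt_id s).const_mul γ
    have hsinh : HasDerivAt (fun x : ℝ => Real.sinh (γ * x)) (Real.cosh (γ * s) * γ) s :=
      hlin.sinh
    have hlog1 : HasDerivAt (fun x : ℝ => Real.log (Real.sinh (γ * x)))
        (Real.cosh (γ * s) * γ / Real.sinh (γ * s)) s := hsinh.log hsh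
    have hlog2 : HasDerivAt Real.log s⁻¹ s := Real.hasDerivAt_log hs.ne'
    have hsq : HasDerivAt (fun x : ℝ => x ^ 2 / 2) s s := by
      simpa using ((hasDerivAt_pow 2 s).div_const 2)
    have h := hsq.add ((((hlog1.sub hlog2).sub (hasDerivAt_const s (Real.log γ))).const_mul
      (Ms / γ)))
    have hsh' : Real.sinh (s * γ) ≠ 0 := by rwa [mul_comm]
    refine h.congr_deriv (Eq.symm ?_)
    rw [hf]
    field_simp
    ring
  -- M has derivative f on (0,∞)
  have hMderiv : ∀ s : ℝ, 0 < s → HasDerivAt M (f s) s := by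
    intro s hs
    have heq : M =ᶠ[nhds s] F := by
      filter_upwards [Ioi_mem_nhds hs] with x hx
      exact hMdef x hx
    exact (hFderiv s hs).congr_of_eventuallyEq heq
  -- f s = s * μ s
  have hfμ : ∀ s : ℝ, 0 < s → f s = s * μ s := by
    intro s hs
    rw [hμ s hs, hf]
    field_simp
    ring
  constructor
  · -- convexity
    -- f is strictly monotone on Ioi 0 since its derivative is positive
    set g : ℝ → ℝ := fun s => 1 - Ms * γ / Real.sinh (γ * s) ^ 2 + Ms * γ / (γ * s) ^ 2
      with hg
    have hfderiv : ∀ s : ℝ, 0 < s → HasDerivAt f (g s) s := by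
      intro s hs
      have hγs : (γ * s) ≠ 0 := (mul_pos hγ hs).ne'
      have hsh := (hsinh_pos s hs).ne'
      have hlin : HasDerivAt (fun x : ℝ => γ * x) γ s := by
        simpa using (hasDerivAt_id s).const_mul γ
      have hsinh : HasDerivAt (fun x : ℝ => Real.sinh (γ * x)) (Real.cosh (γ * s) * γ) s :=
        hlin.sinh
      have hcosh : HasDerivAt (fun x : ℝ => Real.cosh (γ * x)) (Real.sinh (γ * s) * γ) s :=
        hlin.cosh
      have hquot : HasDerivAt (fun x : ℝ => Real.cosh (γ * x) / Real.sinh (γ * x))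
          ((Real.sinh (γ * s) * γ * Real.sinh (γ * s) -
            Real.cosh (γ * s) * (Real.cosh (γ * s) * γ)) / Real.sinh (γ * s) ^ 2) s :=
        hcosh.div hsinh hsh
      have hinv : HasDerivAt (fun x : ℝ => Ms / (γ * x)) (-(Ms * γ) / (γ * s) ^ 2) s := by
        have := (hlin.inv hγs).const_mul Ms
        refine this.congr_deriv (Eq.symm ?_)
        field_simp
      have h := ((hasDerivAt_id s).add (hquot.const_mul Ms)).sub hinv
      refine h.congr_deriv (Eq.symm ?_)
      have hid : Real.cosh (γ * s) ^ 2 - Real.sinh (γ * s) ^ 2 = 1 :=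
        Real.cosh_sq_sub_sinh_sq (γ * s)
      have key : Real.sinh (γ * s) * γ * Real.sinh (γ * s) -
          Real.cosh (γ * s) * (Real.cosh (γ * s) * γ) = -γ := by nlinarith [hid]
      rw [hg]
      dsimp only
      rw [key]
      have hsh' : Real.sinh (s * γ) ≠ 0 := by rwa [mul_comm]
      field_simp
      ring
    have hgpos : ∀ s : ℝ, 0 < s → 0 < g s := by
      intro s hs
      have hγs : 0 < γ * s := mul_pos hγ hs
      have hlt : γ * s < Real.sinh (γ * s) := Real.self_lt_sinh_iff.mpr hγs
      have hsq : (γ * s) ^ 2 < Real.sinh (γ * s) ^ 2 := by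
        have := hsinh_pos s hs; nlinarith
      have h1 : Ms * γ / Real.sinh (γ * s) ^ 2 < Ms * γ / (γ * s) ^ 2 :=
        div_lt_div_of_pos_left (mul_pos hMs hγ) (by positivity) hsq
      rw [hg]; dsimp only; linarith
    have hfmono : StrictMonoOn f (Set.Ioi (0:ℝ)) := by
      apply strictMonoOn_of_deriv_pos (convex_Ioi 0)
      · intro x hx
        exact (hfderiv x hx).continuousAt.continuousWithinAt
      · intro x hx
        rw [interior_Ioi] at hx
        rw [(hfderiv x hx).deriv]
        exact hgpos x hx
    apply MonotoneOn.convexOn_of_deriv (convex_Ioi 0)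
    · intro x hx
      exact (hMderiv x hx).continuousAt.continuousWithinAt
    · intro x hx
      rw [interior_Ioi] at hx
      exact (hMderiv x hx).differentiableAt.differentiableWithinAt
    · rw [interior_Ioi]
      intro x hx y hy hxy
      rw [(hMderiv x hx).deriv, (hMderiv y hy).deriv]
      exact (hfmono.monotoneOn hx hy hxy)
  · intro s hs
    rw [← hfμ s hs]
    exact hMderiv s hs
end

section
/- If for all α ∈ [0, C^{-1/2}) a real number δ ≥ 0 satisfies δ ≤ (μ²/b) · (1-α)²/(1 - Cα²), where C > 1, μ > 0, b > 0, then δ ≤ (μ²/b)(1 - 1/C). -/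
/-- If `δ ≥ 0` satisfies `δ ≤ (μ²/b)(1-α)²/(1-Cα²)` for every `α ∈ [0, C^{-1/2})`
(with `C > 1`, `μ > 0`, `b > 0`), then `δ ≤ (μ²/b)(1 - 1/C)`. -/
theorem distance_bound (C μ b δ : ℝ) (hC : 1 < C) (hμ : 0 < μ) (hb : 0 < b)
    (hδ : 0 ≤ δ)
    (h : ∀ α : ℝ, 0 ≤ α → α < 1 / Real.sqrt C →
      δ ≤ μ ^ 2 / b * ((1 - α) ^ 2 / (1 - C * α ^ 2))) :
    δ ≤ μ ^ 2 / b * (1 - 1 / C) := by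
  have hC0 : (0:ℝ) < C := by linarith
  have hs0 : 0 < Real.sqrt C := Real.sqrt_pos.mpr hC0
  have hs : Real.sqrt C < C := by
    nlinarith [Real.sq_sqrt hC0.le, Real.sqrt_pos.mpr hC0,
      (Real.lt_sqrt (by norm_num : (0:ℝ) ≤ 1)).mpr (by simpa using hC)]
  have hlt : 1 / C < 1 / Real.sqrt C := one_div_lt_one_div_of_lt hs0 hs
  have key := h (1/C) (by positivity) hlt
  have hne : C ≠ 0 := hC0.ne'
  have h1 : 1 - C * (1/C)^2 = 1 - 1/C := by field_simp
  rw [h1] at key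
  have h2 : (1 - 1/C)^2 / (1 - 1/C) = 1 - 1/C := by
    have : (1:ℝ) - 1/C ≠ 0 := by
      have : 1/C < 1 := by rw [div_lt_one hC0]; exact hC
      linarith
    rw [sq, mul_div_assoc, div_self this, mul_one]
  rwa [h2] at key
end
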